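/- Let G be a group, M a G-set, and X a transitive G-set (the action of G on X has exactly one orbit, X nonempty) such that the kernel G_M = {g ∈ G : ∀ m ∈ M, g • m = m} is contained in the kernel G_X = {g ∈ G : ∀ x ∈ X, g • x = x}. Then there exists an injective G-equivariant map from X into P(P(P(M))). -/
import Mathlib


open Pointwise

/-- There is an element of `P(P(M))` whose stabilizer is contained in the kernel of
the action of `G` on `M`: the set of closed initial segments of a well-order on `M`. -/
lemma exists_rigid_set (G : Type*) [Group G] (M : Type*) [MulAction G M] :
    ∃ A : Set (Set M), ∀ g : G, g • A = A → ∀ m : M, g • m = m := by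
  classical
  let r := WellOrderingRel (α := M)
  have hwo : IsWellOrder M r := WellOrderingRel.isWellOrder
  let I : M → Set M := fun m => {m' | r m' m ∨ m' = m}
  refine ⟨Set.range I, fun g hg => ?_⟩
  have key : ∀ m : M, ∃ m'', g • I m = I m'' := by
    intro m
    have : g • I m ∈ Set.range I := by
      rw [← hg]; exact Set.smul_mem_smul_set (Set.mem_range_self m)
    obtain ⟨m'', hm''⟩ := this
    exact ⟨m'', hm''.symm⟩
  intro m
  induction m using (IsWellFounded.wf (r := r)).induction with
  | _ m IH =>
    rcases trichotomous_of r (g • m) m with h | h | h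
    · -- r (g•m) m
      have := IH (g • m) h
      exact smul_left_cancel g this
    · exact h
    · -- r m (g•m): derive contradiction
      exfalso
      obtain ⟨m'', hm''⟩ := key m
      have h1 : g • m ∈ I m'' := by
        rw [← hm'']
        exact Set.smul_mem_smul_set (Or.inr rfl)
      have h2 : m'' ∈ g • I m := by
        rw [hm'']; exact Or.inr rfl
      obtain ⟨k, hk, hgk⟩ := h2
      replace hgk : g • k = m'' := hgk
      by_cases hkm : k = m
      · -- m'' = g • m, and r m (g•m), so m ∈ I m'' = g • I m
        have hm : m ∈ g • I m := by
          rw [hm'', ← hgk, hkm]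
          exact Or.inl h
        obtain ⟨j, hj, hgj⟩ := hm
        replace hgj : g • j = m := hgj
        rcases hj with hj | hj
        · have := IH j hj
          rw [this] at hgj
          rw [hgj] at hj
          exact (irrefl_of r m) hj
        · rw [hj] at hgj
          rw [hgj] at h
          exact (irrefl_of r m) h
      · rcases hk with hk | hk
        · have := IH k hk
          rw [this] at hgk
          -- m'' = k, r k m, and g•m ∈ I k, so r (g•m) m, contradicting r m (g•m)
          rcases h1 with h1 | h1
          · rw [← hgk] at h1
            exact (asymm_of r h) (trans_of r h1 hk)
          · rw [h1, ← hgk] at h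
            exact (asymm_of r h) hk
        · exact hkm hk

theorem transitive_GSet_embeds_in_triple_power
    {G : Type*} [Group G] (M : Type*) [MulAction G M]
    (X : Type*) [MulAction G X] [Nonempty X] [MulAction.IsPretransitive G X]
    (hker : {g : G | ∀ m : M, g • m = m} ⊆ {g : G | ∀ x : X, g • x = x}) :
    ∃ f : X → Set (Set (Set M)),
      Function.Injective f ∧ ∀ (g : G) (x : X), f (g • x) = g • f x := by
  classical
  obtain ⟨x₀⟩ := ‹Nonempty X›
  obtain ⟨A, hA⟩ := exists_rigid_set G M
  refine ⟨fun x => {B | ∃ g : G, g • x₀ = x ∧ B = g • A}, ?_, ?_⟩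
  · intro x y hxy
    obtain ⟨g, hg⟩ := MulAction.exists_smul_eq G x₀ x
    replace hxy : {B : Set (Set M) | ∃ g' : G, g' • x₀ = x ∧ B = g' • A}
        = {B : Set (Set M) | ∃ g' : G, g' • x₀ = y ∧ B = g' • A} := hxy
    have hmem : (g • A : Set (Set M)) ∈ {B : Set (Set M) | ∃ g' : G, g' • x₀ = y ∧ B = g' • A} := by
      rw [← hxy]
      exact ⟨g, hg, rfl⟩
    obtain ⟨g', hg', hgg'⟩ := hmem
    have hfix : (g'⁻¹ * g) • A = A := by
      rw [mul_smul, hgg', inv_smul_smul]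
    have hk : (g'⁻¹ * g) ∈ {g : G | ∀ m : M, g • m = m} := hA _ hfix
    have hx : (g'⁻¹ * g) • x₀ = x₀ := hker hk x₀
    rw [mul_smul] at hx
    have : g • x₀ = g' • x₀ := by
      conv_lhs => rw [← smul_inv_smul g' (g • x₀)]
      rw [hx]
    rw [← hg, this, hg']
  · intro g x
    ext B
    constructor
    · rintro ⟨g₁, hg₁, rfl⟩
      refine ⟨(g⁻¹ * g₁) • A, ⟨g⁻¹ * g₁, ?_, rfl⟩, ?_⟩
      · rw [mul_smul, hg₁, inv_smul_smul]
      · show g • (g⁻¹ * g₁) • A = g₁ • A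
        rw [smul_smul, mul_inv_cancel_left]
    · rintro ⟨B', ⟨g₁, hg₁, rfl⟩, rfl⟩
      exact ⟨g * g₁, by rw [mul_smul, hg₁], by show g • g₁ • A = (g * g₁) • A; rw [smul_smul]⟩
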